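/- Let G be a finite extensive game with perfect information over the game tree T with root v. A joint strategy s is a subgame perfect equilibrium in G if and only if both: (1) s_i(v) ∈ argmax_{x ∈ C(v)} o_i(leaf(s^x)), where i = turn(v); and (2) for every child u ∈ C(v), the induced joint strategy s^u is a subgame perfect equilibrium of the subgame G^u. -/

import Mathlib

/-- A finite extensive game with perfect information: a finite rooted tree whose
leaves carry an outcome for each player and whose internal nodes carry the player
to move and a nonempty finite family of children. -/
inductive ExtGame (ι : Type) : Type where
  | leaf : (ι → ℝ) → ExtGame ι
  | node : ι → (m : ℕ) → (Fin (m + 1) → ExtGame ι) → ExtGame ι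

namespace ExtGame

variable {ι : Type}

/-- A strategy of player `i`: at every node where it is `i`'s turn, a choice of a child. -/
def Strategy (i : ι) : ExtGame ι → Type
  | .leaf _ => PUnit
  | .node j m children => (i = j → Fin (m + 1)) × ∀ c : Fin (m + 1), Strategy i (children c)

/-- The outcome (payoff vector) when every player follows his strategy. -/
def outcome : (G : ExtGame ι) → (∀ i, G.Strategy i) → ι → ℝ
  | .leaf o, _ => o
  | .node j _ children, σ =>
      outcome (children ((σ j).1 rfl)) (fun i => (σ i).2 ((σ j).1 rfl))

/-- Nodes of the game tree, identified by the path from the root. -/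
inductive Node : ExtGame ι → Type where
  | root (G : ExtGame ι) : Node G
  | child {j : ι} {m : ℕ} {children : Fin (m + 1) → ExtGame ι}
      (c : Fin (m + 1)) : Node (children c) → Node (.node j m children)

/-- The subgame rooted at a node. -/
def subgameAt : {G : ExtGame ι} → Node G → ExtGame ι
  | _, .root G => G
  | _, .child c v => subgameAt v

/-- The joint strategy of the subgame rooted at `v` induced by a joint strategy. -/
def restrictProfile : {G : ExtGame ι} → (∀ i, G.Strategy i) → (v : Node G) →
    ∀ i, (subgameAt v).Strategy i
  | _, σ, .root _ => σ
  | _, σ, .child c v => restrictProfile (fun i => (σ i).2 c) v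

/-- Nash equilibrium of (the strategic form of) an extensive game. -/
def NashEq [DecidableEq ι] (G : ExtGame ι) (σ : ∀ i, G.Strategy i) : Prop :=
  ∀ (i : ι) (t : G.Strategy i), G.outcome σ i ≥ G.outcome (Function.update σ i t) i

/-- Subgame perfect equilibrium: the induced joint strategy is a Nash equilibrium
in the subgame rooted at every node. -/
def SPE [DecidableEq ι] (G : ExtGame ι) (σ : ∀ i, G.Strategy i) : Prop :=
  ∀ v : Node G, (subgameAt v).NashEq (restrictProfile σ v)

/-- At the root (if it is a non-leaf), the player to move chooses a child whose
subgame outcome (under the induced strategies) is maximal for him. -/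
def BestAtRoot : (G : ExtGame ι) → (∀ i, G.Strategy i) → Prop
  | .leaf _, _ => True
  | .node j _ children, σ =>
      ∀ c, outcome (children ((σ j).1 rfl)) (fun i => (σ i).2 ((σ j).1 rfl)) j ≥
        outcome (children c) (fun i => (σ i).2 c) j

/-- The list of payoff vectors at the leaves of the game tree (one entry per leaf). -/
def leavesList : ExtGame ι → List (ι → ℝ)
  | .leaf o => [o]
  | .node _ _ children => (List.ofFn fun c => leavesList (children c)).flatten

/-- The game is without relevant ties: at every non-leaf node `u` with `turn(u) = i`,
the outcome function of player `i` is injective on the leaves of the subtree rooted at `u`. -/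
def NoRelevantTies : ExtGame ι → Prop
  | .leaf _ => True
  | .node j m children =>
      ((ExtGame.node j m children).leavesList.Pairwise fun o o' => o j ≠ o' j) ∧
      ∀ c, NoRelevantTies (children c)

/-- The player to move at a node (`none` if the node is a leaf). -/
def turnAt {G : ExtGame ι} (v : Node G) : Option ι :=
  match subgameAt v with
  | .leaf _ => none
  | .node j _ _ => some j

end ExtGame


section Aux

open ExtGame

variable {n : ℕ}

lemma update_snd {j : Fin n} {m : ℕ} {children : Fin (m + 1) → ExtGame (Fin n)}
    (σ : ∀ i, (ExtGame.node j m children).Strategy i) (i : Fin n)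
    (t : (ExtGame.node j m children).Strategy i) (c : Fin (m + 1)) :
    (fun k => ((Function.update σ i t) k).2 c) =
      Function.update (fun k => (σ k).2 c) i (t.2 c) := by
  funext k
  rcases eq_or_ne k i with rfl | h
  · simp
  · simp [Function.update_of_ne h]

lemma nash_of_best {j : Fin n} {m : ℕ} {children : Fin (m + 1) → ExtGame (Fin n)}
    (σ : ∀ i, (ExtGame.node j m children).Strategy i)
    (h1 : (ExtGame.node j m children).BestAtRoot σ)
    (h2 : ∀ c, (children c).NashEq (fun i => (σ i).2 c)) :
    (ExtGame.node j m children).NashEq σ := by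
  intro i t
  rcases eq_or_ne i j with rfl | hij
  · have hupd : Function.update σ i t i = t := Function.update_self ..
    have hout : (ExtGame.node i m children).outcome (Function.update σ i t) i =
        (children (t.1 rfl)).outcome
          (Function.update (fun k => (σ k).2 (t.1 rfl)) i (t.2 (t.1 rfl))) i := by
      rw [ExtGame.outcome, hupd, update_snd]
    rw [hout]
    calc (children (t.1 rfl)).outcome
          (Function.update (fun k => (σ k).2 (t.1 rfl)) i (t.2 (t.1 rfl))) i
        ≤ (children (t.1 rfl)).outcome (fun k => (σ k).2 (t.1 rfl)) i := h2 (t.1 rfl) i _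
      _ ≤ (ExtGame.node i m children).outcome σ i := h1 (t.1 rfl)
  · have hupd : Function.update σ i t j = σ j := Function.update_of_ne (Ne.symm hij) _ _
    have hout : (ExtGame.node j m children).outcome (Function.update σ i t) i =
        (children ((σ j).1 rfl)).outcome
          (Function.update (fun k => (σ k).2 ((σ j).1 rfl)) i (t.2 ((σ j).1 rfl))) i := by
      rw [ExtGame.outcome, hupd, update_snd]
    rw [hout]
    exact h2 ((σ j).1 rfl) i _

lemma best_of_nash {j : Fin n} {m : ℕ} {children : Fin (m + 1) → ExtGame (Fin n)}
    (σ : ∀ i, (ExtGame.node j m children).Strategy i)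
    (h : (ExtGame.node j m children).NashEq σ) :
    (ExtGame.node j m children).BestAtRoot σ := by
  intro c
  have ht := h j ⟨fun _ => c, (σ j).2⟩
  have hupd : Function.update σ j ((fun _ => c, (σ j).2) :
      (ExtGame.node j m children).Strategy j) j = (fun _ => c, (σ j).2) :=
    Function.update_self ..
  have hout : (ExtGame.node j m children).outcome
      (Function.update σ j ((fun _ => c, (σ j).2) :
        (ExtGame.node j m children).Strategy j)) j =
      (children c).outcome (fun k => (σ k).2 c) j := by
    rw [ExtGame.outcome, hupd]
    erw [update_snd]
    simp [Function.update_eq_self]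
  rw [hout] at ht
  exact ht

end Aux

/-- A joint strategy `σ` of a finite extensive game (whose root is a non-leaf node with
player `j` to move and children `children c`) is a subgame perfect equilibrium iff
(1) at the root, `σ_j` selects a child whose subgame outcome is maximal for `j`, and
(2) for every child `c` of the root, the induced joint strategy is a subgame perfect
equilibrium of the subgame rooted at `c`. -/
theorem spe_iff_bestAtRoot_and_spe_children {n : ℕ} (j : Fin n) (m : ℕ)
    (children : Fin (m + 1) → ExtGame (Fin n))
    (σ : ∀ i, (ExtGame.node j m children).Strategy i) :
    (ExtGame.node j m children).SPE σ ↔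
      (ExtGame.node j m children).BestAtRoot σ ∧
      ∀ c : Fin (m + 1), (children c).SPE (fun i => (σ i).2 c) := by
  constructor
  · intro h
    refine ⟨best_of_nash σ (h (.root _)), fun c v => h (.child c v)⟩
  · rintro ⟨h1, h2⟩ v
    match v with
    | .root _ => exact nash_of_best σ h1 (fun c => h2 c (.root _))
    | .child c v => exact h2 c v
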